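/- arXiv:1412.8468 — 2 statements merged into one kernel-verified Lean document; each statement's English description precedes it below -/
import Mathlib

section
/- Every orthomorphism of a Dedekind complete vector lattice E is order continuous: if a net (x_α) decreases to 0 in E, then inf_α |T x_α| = 0. -/
section Orth

variable {E : Type*} [Lattice E] [AddCommGroup E]
  [CovariantClass E E (· + ·) (· ≤ ·)] [Module ℝ E]

/-- Order boundedness of a linear endomorphism. -/
def OrdBounded (T : E →ₗ[ℝ] E) : Prop :=
  ∀ a b : E, ∃ c d : E, ∀ x : E, x ∈ Set.Icc a b → T x ∈ Set.Icc c d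

/-- An orthomorphism: an order bounded, band-preserving linear endomorphism. -/
def IsOrthomorphism (T : E →ₗ[ℝ] E) : Prop :=
  OrdBounded T ∧
  ∀ x y : E, (x ⊔ -x) ⊓ (y ⊔ -y) = 0 → ((T x) ⊔ -(T x)) ⊓ (y ⊔ -y) = 0

/- ### Auxiliary lemmas -/

private lemma aux_inf_add_le (a b c : E) (hc : 0 ≤ c) : a ⊓ (b + c) ≤ a ⊓ b + c := by
  rw [← sub_le_iff_le_add, sub_eq_add_neg, inf_add]
  refine inf_le_inf ?_ ?_
  · calc a + -c ≤ a + 0 := add_le_add_right (neg_nonpos.2 hc) a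
      _ = a := add_zero a
  · rw [add_neg_cancel_right]

private lemma aux_posPart_sub (a b : E) : (a - b)⁺ = a - a ⊓ b := by
  have h1 : (a - b) ⊔ 0 = (a ⊔ b) - b := by rw [sup_sub, sub_self]
  have h2 := inf_add_sup a b
  have h3 : a ⊔ b = a + b - a ⊓ b := by rw [← h2]; abel
  rw [posPart_def, h1, h3]
  abel

private lemma aux_disjoint_parts (a b : E) : (a - b)⁺ ⊓ (b - a)⁺ = 0 := by
  have h : (b - a)⁺ = (a - b)⁻ := by
    rw [posPart_def, negPart_def, neg_sub]
  rw [h]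
  exact posPart_inf_negPart_eq_zero (a - b)

private lemma aux_inf_add_inf (a b c : E) (ha : 0 ≤ a) (hb : 0 ≤ b) (hc : 0 ≤ c) :
    a ⊓ (b + c) ≤ a ⊓ b + a ⊓ c := by
  have key : a ⊓ b + a ⊓ c = ((a ⊓ b) + a) ⊓ ((a ⊓ b) + c) := add_inf _ _ _
  have key2 : ((a ⊓ b) + a) ⊓ ((a ⊓ b) + c) = ((a + a) ⊓ (b + a)) ⊓ ((a + c) ⊓ (b + c)) := by
    rw [inf_add a b a, inf_add a b c]
  rw [key, key2]
  refine le_inf (le_inf ?_ ?_) (le_inf ?_ ?_)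
  · exact le_trans inf_le_left (le_add_of_nonneg_right ha)
  · exact le_trans inf_le_left (le_add_of_nonneg_left hb)
  · exact le_trans inf_le_left (le_add_of_nonneg_right hc)
  · exact inf_le_right

private lemma aux_inf_nsmul_le (a b : E) (ha : 0 ≤ a) (hb : 0 ≤ b) :
    ∀ n : ℕ, a ⊓ (n • b) ≤ n • (a ⊓ b) := by
  intro n
  induction n with
  | zero => simpa using inf_le_right
  | succ n ih =>
    have h1 : a ⊓ ((n + 1) • b) = a ⊓ (n • b + b) := by rw [succ_nsmul]
    have h2 : a ⊓ (n • b + b) ≤ a ⊓ (n • b) + a ⊓ b :=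
      aux_inf_add_inf a (n • b) b ha (nsmul_nonneg hb n) hb
    calc a ⊓ ((n + 1) • b) ≤ a ⊓ (n • b) + a ⊓ b := by rw [h1]; exact h2
      _ ≤ n • (a ⊓ b) + a ⊓ b := add_le_add_left ih _
      _ = (n + 1) • (a ⊓ b) := (succ_nsmul _ n).symm

private lemma aux_abs_sub_disj (p q : E) (hp : 0 ≤ p) (hq : 0 ≤ q) (h : p ⊓ q = 0) :
    |p - q| = p + q := by
  have hpos : (p - q)⁺ = p := by rw [aux_posPart_sub, h, sub_zero]
  have hneg : (p - q)⁻ = q := by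
    rw [negPart_def, neg_sub, ← posPart_def, aux_posPart_sub, inf_comm, h, sub_zero]
  rw [← posPart_add_negPart (p - q), hpos, hneg]

private lemma aux_abs_nsmul (n : ℕ) (a : E) : |n • a| = n • |a| := by
  have hp := posPart_nonneg a
  have hn := negPart_nonneg a
  have hdisj : (n • a⁺) ⊓ (n • a⁻) = 0 := by
    have h1 : (n • a⁺) ⊓ (n • a⁻) ≤ n • ((n • a⁺) ⊓ a⁻) :=
      aux_inf_nsmul_le _ _ (nsmul_nonneg hp n) hn n
    have h2 : (n • a⁺) ⊓ a⁻ ≤ n • (a⁻ ⊓ a⁺) := by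
      rw [inf_comm]; exact aux_inf_nsmul_le a⁻ a⁺ hn hp n
    have h3 : a⁻ ⊓ a⁺ = 0 := by rw [inf_comm]; exact posPart_inf_negPart_eq_zero a
    have h4 : (n • a⁺) ⊓ (n • a⁻) ≤ 0 := by
      refine h1.trans ?_
      calc n • ((n • a⁺) ⊓ a⁻) ≤ n • (n • (a⁻ ⊓ a⁺)) := nsmul_le_nsmul_right h2 n
        _ = 0 := by rw [h3, smul_zero, smul_zero]
    exact le_antisymm h4 (le_inf (nsmul_nonneg hp n) (nsmul_nonneg hn n))
  have hna : n • a = n • a⁺ - n • a⁻ := by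
    rw [← smul_sub, posPart_sub_negPart]
  rw [hna, aux_abs_sub_disj _ _ (nsmul_nonneg hp n) (nsmul_nonneg hn n) hdisj,
    ← smul_add, posPart_add_negPart]

private lemma aux_arch (hDC : ∀ s : Set E, s.Nonempty → BddAbove s → ∃ a, IsLUB s a)
    (y w : E) (h : ∀ n : ℕ, n • y ≤ w) : y ≤ 0 := by
  obtain ⟨a, ha⟩ := hDC (Set.range fun n : ℕ => n • y) ⟨0, 0, zero_smul ℕ y⟩ ⟨w, by
    rintro _ ⟨n, rfl⟩; exact h n⟩
  have hub : ∀ n : ℕ, n • y ≤ a - y := by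
    intro n
    have h5 : (n + 1) • y ≤ a := ha.1 ⟨n + 1, rfl⟩
    rw [succ_nsmul] at h5
    exact le_sub_iff_add_le.2 h5
  have hle : a ≤ a - y := ha.2 (by rintro _ ⟨n, rfl⟩; exact hub n)
  rw [sub_eq_add_neg] at hle
  exact neg_nonneg.1 ((le_add_iff_nonneg_right a).1 hle)

private lemma aux_tail_glb {ι : Type*} [Preorder ι] [Nonempty ι]
    (hdir : DirectedOn (· ≤ ·) (Set.univ : Set ι))
    (x : ι → E) (hmono : ∀ i j : ι, i ≤ j → x j ≤ x i)
    (hinf : IsGLB (Set.range x) 0) :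
    ∀ (n : ℕ) (b : E), (∀ i, b ≤ n • x i) → b ≤ 0 := by
  intro n
  induction n with
  | zero =>
    intro b hb
    obtain ⟨i⟩ := ‹Nonempty ι›
    simpa using hb i
  | succ n ih =>
    intro b hb
    have hbx : ∀ j, b ≤ x j := by
      intro j
      have : b - x j ≤ 0 := by
        refine ih (b - x j) fun i => ?_
        obtain ⟨k, -, hik, hjk⟩ := hdir i trivial j trivial
        have h1 : b ≤ (n + 1) • x k := hb k
        rw [succ_nsmul] at h1
        have h2 : n • x k ≤ n • x i := nsmul_le_nsmul_right (hmono i k hik) n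
        have h3 : x k ≤ x j := hmono j k hjk
        have : b ≤ n • x i + x j := h1.trans (add_le_add h2 h3)
        exact sub_le_iff_le_add.2 this
      exact sub_nonpos.1 this
    exact hinf.2 (by rintro _ ⟨j, rfl⟩; exact hbx j)

/-- every orthomorphism of a Dedekind complete vector lattice is
order continuous: if a (decreasing) net `(x_α)` has infimum `0`, then
`inf_α |T x_α| = 0`. -/
theorem stmt_10
    (hDC : ∀ s : Set E, s.Nonempty → BddAbove s → ∃ a, IsLUB s a)
    (T : E →ₗ[ℝ] E) (hT : IsOrthomorphism T)
    {ι : Type*} [Preorder ι] [Nonempty ι] (hdir : DirectedOn (· ≤ ·) (Set.univ : Set ι))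
    (x : ι → E) (hmono : ∀ i j : ι, i ≤ j → x j ≤ x i)
    (hinf : IsGLB (Set.range x) 0) :
    IsGLB (Set.range fun i => (T (x i)) ⊔ -(T (x i))) 0 := by
  obtain ⟨α₀⟩ := ‹Nonempty ι›
  have hx0 : ∀ i, 0 ≤ x i := fun i => hinf.1 ⟨i, rfl⟩
  set u := x α₀ with hu
  have hu0 : 0 ≤ u := hx0 α₀
  constructor
  · rintro _ ⟨i, rfl⟩
    exact abs_nonneg (T (x i))
  · rintro b hb
    set y := b⁺ with hy
    have hy0 : 0 ≤ y := posPart_nonneg b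
    have hyb : ∀ i, y ≤ |T (x i)| := fun i =>
      sup_le (hb ⟨i, rfl⟩) (abs_nonneg _)
    -- order boundedness on [-u, u]
    obtain ⟨c, d, hcd⟩ := hT.1 (-u) u
    set w := (d ⊔ -c) ⊔ 0 with hwdef
    have hw0 : 0 ≤ w := le_sup_right
    have hwb : ∀ z : E, -u ≤ z → z ≤ u → |T z| ≤ w := by
      intro z h1 h2
      obtain ⟨hc', hd'⟩ := hcd z ⟨h1, h2⟩
      refine sup_le ?_ ?_
      · calc T z ≤ d := hd'
          _ ≤ d ⊔ -c := le_sup_left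
          _ ≤ w := le_sup_left
      · calc -T z ≤ -c := neg_le_neg_iff.2 hc'
          _ ≤ d ⊔ -c := le_sup_right
          _ ≤ w := le_sup_left
    -- band preservation in positive form
    have hband : ∀ v z : E, 0 ≤ v → 0 ≤ z → v ⊓ z = 0 → |T v| ⊓ z = 0 := by
      intro v z hv hz h
      have h' : (v ⊔ -v) ⊓ (z ⊔ -z) = 0 := by
        rw [show v ⊔ -v = |v| from rfl, show z ⊔ -z = |z| from rfl,
          abs_of_nonneg hv, abs_of_nonneg hz]
        exact h
      have := hT.2 v z h'
      rwa [show z ⊔ -z = |z| from rfl, abs_of_nonneg hz] at this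
    -- Main claim: ∀ n, n • y ≤ w
    have hkey : ∀ n : ℕ, n • y ≤ w := by
      intro n
      set a := (n • y - w)⁺ with hadef
      have ha0 : 0 ≤ a := posPart_nonneg _
      -- Step A
      have hstepA : ∀ i, a ⊓ (u - n • x i)⁺ = 0 := by
        intro i
        set z₁ := (n • x i) ⊓ u with hz₁
        set v := (n • x i - u)⁺ with hv
        have hz₁0 : 0 ≤ z₁ := le_inf (nsmul_nonneg (hx0 i) n) hu0
        have hz₁u : z₁ ≤ u := inf_le_right
        have hv0 : 0 ≤ v := posPart_nonneg _
        have hsum : z₁ + v = n • x i := by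
          rw [hv, aux_posPart_sub, hz₁]; abel
        have hTbound : |T z₁| ≤ w := hwb z₁ ((neg_nonpos.2 hu0).trans hz₁0) hz₁u
        have hsplit : n • y ≤ w + |T v| := by
          calc n • y ≤ n • |T (x i)| := nsmul_le_nsmul_right (hyb i) n
            _ = |n • T (x i)| := (aux_abs_nsmul n _).symm
            _ = |T (n • x i)| := by rw [map_nsmul T n (x i)]
            _ = |T z₁ + T v| := by rw [← map_add, hsum]
            _ ≤ |T z₁| + |T v| := abs_add_le _ _
            _ ≤ w + |T v| := add_le_add_left hTbound _
        have hav : a ≤ |T v| :=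
          sup_le (sub_le_iff_le_add.2 (by rwa [add_comm] at hsplit)) (abs_nonneg _)
        have hdisj : v ⊓ (u - n • x i)⁺ = 0 := aux_disjoint_parts _ _
        have hTv : |T v| ⊓ (u - n • x i)⁺ = 0 :=
          hband v _ hv0 (posPart_nonneg _) hdisj
        refine le_antisymm ?_ (le_inf ha0 (posPart_nonneg _))
        calc a ⊓ (u - n • x i)⁺ ≤ |T v| ⊓ (u - n • x i)⁺ := inf_le_inf_right _ hav
          _ = 0 := hTv
      -- Step B : a ⊓ u = 0
      have hstepB : a ⊓ u = 0 := by
        have hb' : ∀ i, a ⊓ u ≤ n • x i := by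
          intro i
          have hdecomp : u = (u - n • x i)⁺ + u ⊓ (n • x i) := by
            rw [aux_posPart_sub]; abel
          calc a ⊓ u = a ⊓ ((u - n • x i)⁺ + u ⊓ (n • x i)) := by rw [← hdecomp]
            _ ≤ a ⊓ (u - n • x i)⁺ + u ⊓ (n • x i) :=
              aux_inf_add_le _ _ _ (le_inf hu0 (nsmul_nonneg (hx0 i) n))
            _ = u ⊓ (n • x i) := by rw [hstepA i, zero_add]
            _ ≤ n • x i := inf_le_right
        have h0 : a ⊓ u ≤ 0 := aux_tail_glb hdir x hmono hinf n (a ⊓ u) hb'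
        exact le_antisymm h0 (le_inf ha0 hu0)
      -- Step C : a ⊓ y = 0
      have hstepC : a ⊓ y = 0 := by
        have hTu : |T u| ⊓ a = 0 := hband u a hu0 ha0 (by rw [inf_comm]; exact hstepB)
        refine le_antisymm ?_ (le_inf ha0 hy0)
        calc a ⊓ y ≤ a ⊓ |T u| := inf_le_inf_left a (hyb α₀)
          _ = |T u| ⊓ a := inf_comm _ _
          _ = 0 := hTu
      -- Step D
      have h1 : n • y ≤ a + w := sub_le_iff_le_add.1 (le_posPart _)
      calc n • y = (n • y) ⊓ (n • y) := (inf_idem _).symm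
        _ ≤ (n • y) ⊓ (a + w) := inf_le_inf_left _ h1
        _ ≤ (n • y) ⊓ a + w := aux_inf_add_le _ _ _ hw0
        _ = a ⊓ (n • y) + w := by rw [inf_comm]
        _ ≤ n • (a ⊓ y) + w := add_le_add_left (aux_inf_nsmul_le a y ha0 hy0 n) w
        _ = w := by rw [hstepC, smul_zero, zero_add]
    have hyle : y ≤ 0 := aux_arch hDC y w hkey
    exact (le_posPart b).trans hyle

end Orth
end

section
/- Let X be a real vector space, E a Dedekind complete vector lattice, and f : X → E quasidifferentiable at x₀ with directional derivative f'(x₀) = p − q, where p, q : X → E are sublinear. If x₀ is a local minimum of f in the algebraic sense (there is an absorbing set U with f(x₀) ≤ f(x) for all x ∈ x₀ + U), then q(h) ≤ p(h) for all h ∈ X, i.e., f'(x₀)h ≥ 0 for all directions h. -/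
section QDmin

variable {X E : Type*} [AddCommGroup X] [Module ℝ X]
  [Lattice E] [AddCommGroup E] [CovariantClass E E (· + ·) (· ≤ ·)] [Module ℝ E]

/-- A sublinear operator: subadditive and positively homogeneous. -/
def Sublinear (p : X → E) : Prop :=
  (∀ x y : X, p (x + y) ≤ p x + p y) ∧
  (∀ (l : ℝ), 0 ≤ l → ∀ x : X, p (l • x) = l • p x)

/-- The difference quotient of `f` at `x₀` in direction `h`. -/
noncomputable def diffQuot (f : X → E) (x₀ h : X) (a : ℝ) : E :=
  a⁻¹ • (f (x₀ + a • h) - f x₀)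

/-- `d` is the Dini (one-sided directional) derivative of `f` at `x₀` in direction `h`. -/
def HasDiniDerivAt (f : X → E) (x₀ h : X) (d : E) : Prop :=
  IsGLB {s : E | ∃ ε > (0 : ℝ), IsLUB (diffQuot f x₀ h '' Set.Ioo 0 ε) s} d ∧
  IsLUB {s : E | ∃ ε > (0 : ℝ), IsGLB (diffQuot f x₀ h '' Set.Ioo 0 ε) s} d

/-- An (algebraically) absorbing subset of `X`: each point has all sufficiently small
positive multiples inside the set (`0 ∈ core U`). -/
def Absorbing (U : Set X) : Prop :=
  ∀ x : X, ∃ ε > (0 : ℝ), ∀ t : ℝ, 0 < t → t < ε → t • x ∈ U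


private lemma nsmul_nonneg' {E : Type*} [AddCommGroup E] [Lattice E]
    [CovariantClass E E (· + ·) (· ≤ ·)] {x : E} (hx : 0 ≤ x) :
    ∀ n : ℕ, 0 ≤ n • x := by
  intro n
  induction n with
  | zero => simp
  | succ k ih =>
    rw [succ_nsmul]
    calc (0:E) ≤ x := hx
    _ = 0 + x := (zero_add x).symm
    _ ≤ k • x + x := add_le_add_left ih x

/-- if `f` is quasidifferentiable at `x₀` with `f'(x₀) = p − q`
(`p, q` sublinear) and `x₀` is an algebraic local minimum of `f`, then
`q(h) ≤ p(h)`, i.e. `f'(x₀)h ≥ 0`, for every direction `h`. -/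
theorem stmt_17
    (hDC : ∀ s : Set E, s.Nonempty → BddAbove s → ∃ a, IsLUB s a)
    (f : X → E) (x₀ : X) (p q : X → E)
    (hp : Sublinear p) (hq : Sublinear q)
    (hderiv : ∀ h : X, HasDiniDerivAt f x₀ h (p h - q h))
    (hmin : ∃ U : Set X, Absorbing U ∧ ∀ u ∈ U, f x₀ ≤ f (x₀ + u)) :
    ∀ h : X, q h ≤ p h := by
  obtain ⟨U, hU, hUmin⟩ := hmin
  intro h
  rw [← sub_nonneg]
  obtain ⟨ε, hε, ht⟩ := hU h
  refine (hderiv h).1.2 ?_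
  rintro s ⟨ε', hε', hs⟩
  obtain ⟨n, hn⟩ := exists_nat_gt (max ε⁻¹ ε'⁻¹)
  have hn0 : (0:ℝ) < n := lt_of_lt_of_le (inv_pos.2 hε) ((le_max_left _ _).trans hn.le)
  have ha0 : (0:ℝ) < (n:ℝ)⁻¹ := inv_pos.2 hn0
  have haε : (n:ℝ)⁻¹ < ε := by
    have h1 : ε⁻¹ < (n:ℝ) := lt_of_le_of_lt (le_max_left _ _) hn
    calc (n:ℝ)⁻¹ < (ε⁻¹)⁻¹ := by
          exact inv_strictAnti₀ (inv_pos.2 hε) h1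
    _ = ε := inv_inv ε
  have haε' : (n:ℝ)⁻¹ < ε' := by
    have h1 : ε'⁻¹ < (n:ℝ) := lt_of_le_of_lt (le_max_right _ _) hn
    calc (n:ℝ)⁻¹ < (ε'⁻¹)⁻¹ := by
          exact inv_strictAnti₀ (inv_pos.2 hε') h1
    _ = ε' := inv_inv ε'
  have hmem : diffQuot f x₀ h ((n:ℝ)⁻¹) ∈ diffQuot f x₀ h '' Set.Ioo 0 ε' :=
    ⟨(n:ℝ)⁻¹, ⟨ha0, haε'⟩, rfl⟩
  have hle : diffQuot f x₀ h ((n:ℝ)⁻¹) ≤ s := hs.1 hmem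
  refine le_trans ?_ hle
  have hx : (0:E) ≤ f (x₀ + (n:ℝ)⁻¹ • h) - f x₀ :=
    sub_nonneg.2 (hUmin _ (ht _ ha0 haε))
  have : diffQuot f x₀ h ((n:ℝ)⁻¹) = (n:ℝ) • (f (x₀ + (n:ℝ)⁻¹ • h) - f x₀) := by
    rw [diffQuot, inv_inv]
  rw [this, Nat.cast_smul_eq_nsmul ℝ n]
  exact nsmul_nonneg' hx n


end QDmin
end
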